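/- For every k > 0 and every x ∈ ℝ³ with |x| > 1, ∫_{S²} (∇G^k)(x−y) × y dσ(y) = 0, where × denotes the vector cross product in ℝ³. (This is the key step showing that the vector field w(x) = ∫_{S²} (k² I + Hess) G^k(x−y) y dσ(y) is curl-free in the exterior of the unit ball.) -/

import Mathlib

open MeasureTheory

noncomputable section

/-- The fundamental solution `G^k(z) = -e^{ik|z|}/(4π|z|)` of the Helmholtz operator
`Δ + k²` in `ℝ³`. -/
noncomputable def G (k : ℂ) (z : EuclideanSpace ℝ (Fin 3)) : ℂ :=
  -Complex.exp (Complex.I * k * ‖z‖) / (4 * Real.pi * ‖z‖ : ℝ)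

/-- The gradient `∇G^k` of the fundamental solution, as a `ℂ³`-valued function. -/
noncomputable def gradG (k : ℂ) (z : EuclideanSpace ℝ (Fin 3)) (i : Fin 3) : ℂ :=
  fderiv ℝ (G k) z (EuclideanSpace.single i 1)

/-- The vector cross product on `ℂ³`. -/
def cross3 (a b : Fin 3 → ℂ) : Fin 3 → ℂ :=
  ![a 1 * b 2 - a 2 * b 1, a 2 * b 0 - a 0 * b 2, a 0 * b 1 - a 1 * b 0]

/-- The surface measure on the unit sphere `S² ⊂ ℝ³`: the 2-dimensional Hausdorff
measure restricted to the sphere. -/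
noncomputable def sphMeasure : Measure (EuclideanSpace ℝ (Fin 3)) :=
  (Measure.hausdorffMeasure 2).restrict (Metric.sphere (0 : EuclideanSpace ℝ (Fin 3)) 1)

/-! ### Auxiliary material -/

/-- The radial profile of `G k` as a function of `r²`. -/
noncomputable def Fk (k : ℝ) (s : ℝ) : ℂ :=
  -Complex.exp (Complex.I * k * Real.sqrt s) / ((4 * Real.pi * Real.sqrt s : ℝ) : ℂ)

lemma G_eq_Fk (k : ℝ) (z : EuclideanSpace ℝ (Fin 3)) : G k z = Fk k (‖z‖ ^ 2) := by
  simp [G, Fk, Real.sqrt_sq (norm_nonneg z)]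

lemma differentiableAt_Fk (k : ℝ) {s : ℝ} (hs : 0 < s) : DifferentiableAt ℝ (Fk k) s := by
  have hsqrt : DifferentiableAt ℝ Real.sqrt s := (Real.hasDerivAt_sqrt hs.ne').differentiableAt
  have hsqC : DifferentiableAt ℝ (fun t : ℝ => ((Real.sqrt t : ℝ) : ℂ)) s :=
    Complex.ofRealCLM.differentiableAt.comp s hsqrt
  have hnum : DifferentiableAt ℝ
      (fun t : ℝ => -Complex.exp (Complex.I * k * Real.sqrt t)) s :=
    ((hsqC.const_mul (Complex.I * k)).cexp).neg
  have hden : DifferentiableAt ℝ (fun t : ℝ => ((4 * Real.pi * Real.sqrt t : ℝ) : ℂ)) s :=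
    Complex.ofRealCLM.differentiableAt.comp s (hsqrt.const_mul (4 * Real.pi))
  have hpos : 0 < 4 * Real.pi * Real.sqrt s :=
    mul_pos (by positivity) (Real.sqrt_pos.mpr hs)
  have hne : ((4 * Real.pi * Real.sqrt s : ℝ) : ℂ) ≠ 0 := by
    exact_mod_cast hpos.ne'
  exact hnum.div hden hne

lemma gradG_formula (k : ℝ) {z : EuclideanSpace ℝ (Fin 3)} (hz : z ≠ 0) (i : Fin 3) :
    gradG k z i = (2 * deriv (Fk k) (‖z‖ ^ 2)) * ((z i : ℝ) : ℂ) := by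
  have hzn : 0 < ‖z‖ := norm_pos_iff.mpr hz
  have hs : (0 : ℝ) < ‖z‖ ^ 2 := by positivity
  have hF : HasDerivAt (Fk k) (deriv (Fk k) (‖z‖ ^ 2)) (‖z‖ ^ 2) :=
    (differentiableAt_Fk k hs).hasDerivAt
  have hsq : HasFDerivAt (fun w : EuclideanSpace ℝ (Fin 3) => ‖w‖ ^ 2)
      ((2 : ℕ) • (innerSL ℝ z)) z := (hasStrictFDerivAt_norm_sq z).hasFDerivAt
  have hG : HasFDerivAt (G k)
      ((ContinuousLinearMap.smulRight (1 : ℝ →L[ℝ] ℝ) (deriv (Fk k) (‖z‖ ^ 2))).comp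
        ((2 : ℕ) • (innerSL ℝ z))) z := by
    have hcomp := hF.hasFDerivAt.comp z hsq
    have hfun : G (k : ℂ) = (Fk k) ∘ (fun w : EuclideanSpace ℝ (Fin 3) => ‖w‖ ^ 2) :=
      funext fun w => G_eq_Fk k w
    rw [hfun]; exact hcomp
  rw [gradG, hG.fderiv]
  have hinner : (inner ℝ z (EuclideanSpace.single i (1 : ℝ)) : ℝ) = z i := by
    rw [EuclideanSpace.inner_single_right]; simp
  simp only [ContinuousLinearMap.comp_apply, ContinuousLinearMap.smul_apply,
    innerSL_apply_apply, hinner, ContinuousLinearMap.smulRight_apply,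
    ContinuousLinearMap.one_apply, smul_eq_mul, nsmul_eq_mul, Complex.real_smul]
  push_cast
  ring

/-- Real cross product on `Fin 3 → ℝ`. -/
def rcross (a b : Fin 3 → ℝ) : Fin 3 → ℝ :=
  ![a 1 * b 2 - a 2 * b 1, a 2 * b 0 - a 0 * b 2, a 0 * b 1 - a 1 * b 0]

/-- The vector `v` with `(x × w)ₘ = ⟪v, w⟫`. -/
def vvec (m : Fin 3) (x : Fin 3 → ℝ) : Fin 3 → ℝ :=
  ![![0, -x 2, x 1], ![x 2, 0, -x 0], ![-x 1, x 0, 0]] m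

lemma vvec_orth (m : Fin 3) (x : Fin 3 → ℝ) : (∑ j, vvec m x j * x j) = 0 := by
  fin_cases m <;> simp [vvec, Fin.sum_univ_three] <;> ring

lemma cross_form (k : ℝ) (x y : EuclideanSpace ℝ (Fin 3)) (m : Fin 3)
    (hz : x - y ≠ 0) :
    cross3 (gradG k (x - y)) (fun j => (y j : ℂ)) m =
      (2 * deriv (Fk k) (‖x - y‖ ^ 2)) * ((∑ j, vvec m x j * y j : ℝ) : ℂ) := by
  have h0 := gradG_formula k hz 0
  have h1 := gradG_formula k hz 1
  have h2 := gradG_formula k hz 2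
  have e0 : (x - y) 0 = x 0 - y 0 := rfl
  have e1 : (x - y) 1 = x 1 - y 1 := rfl
  have e2 : (x - y) 2 = x 2 - y 2 := rfl
  rw [e0] at h0; rw [e1] at h1; rw [e2] at h2
  fin_cases m <;>
    simp [cross3, vvec, Fin.sum_univ_three, h0, h1, h2] <;>
    push_cast <;> ring

/-- For every `k > 0` and every `x ∈ ℝ³` with `|x| > 1`,
`∫_{S²} ∇G^k(x−y) × y dσ(y) = 0`, where `×` is the vector cross product. -/
theorem grad_cross_normal_integral_vanishes
    (k : ℝ) (hk : 0 < k) (x : EuclideanSpace ℝ (Fin 3)) (hx : 1 < ‖x‖) :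
    ∀ m : Fin 3,
      ∫ y, cross3 (gradG k (x - y)) (fun j => (y j : ℂ)) m ∂sphMeasure = 0 := by
  intro m
  classical
  set S : Set (EuclideanSpace ℝ (Fin 3)) := Metric.sphere 0 1 with hS
  set f : EuclideanSpace ℝ (Fin 3) → ℂ :=
    fun y => cross3 (gradG k (x - y)) (fun j => (y j : ℂ)) m with hf
  set v : EuclideanSpace ℝ (Fin 3) := WithLp.toLp 2 (vvec m x) with hv
  -- pointwise formula for the integrand
  have hform : ∀ y : EuclideanSpace ℝ (Fin 3), x - y ≠ 0 →
      f y = (2 * deriv (Fk k) (‖x - y‖ ^ 2)) * ((∑ j, v j * y j : ℝ) : ℂ) := by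
    intro y hz
    exact cross_form k x y m hz
  -- the reflection fixing x and negating v
  set R : EuclideanSpace ℝ (Fin 3) ≃ₗᵢ[ℝ] EuclideanSpace ℝ (Fin 3) :=
    Submodule.reflection (ℝ ∙ v)ᗮ with hR
  have hRx : R x = x := by
    apply Submodule.reflection_mem_subspace_eq_self
    rw [Submodule.mem_orthogonal_singleton_iff_inner_right]
    have : (inner ℝ v x : ℝ) = ∑ j, v j * x j := by
      simp [PiLp.inner_apply, RCLike.inner_apply, mul_comm]
    rw [this, hv]
    exact vvec_orth m x
  have hRv : R v = -v := Submodule.reflection_orthogonalComplement_singleton_eq_neg v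
  have hRR : ∀ w, R (R w) = w := fun w => Submodule.reflection_reflection _ w
  have hinnerR : ∀ y, (inner ℝ v (R y) : ℝ) = -(inner ℝ v y : ℝ) := by
    intro y
    calc (inner ℝ v (R y) : ℝ) = (inner ℝ (R v) (R (R y)) : ℝ) := (R.inner_map_map v (R y)).symm
    _ = (inner ℝ (-v) y : ℝ) := by rw [hRv, hRR]
    _ = -(inner ℝ v y : ℝ) := inner_neg_left _ _
  -- R preserves the sphere measure
  have hRpre : R ⁻¹' S = S := by
    ext w
    simp [hS, mem_sphere_iff_norm, R.norm_map]
  have hmapH : Measure.map R (Measure.hausdorffMeasure 2 :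
      Measure (EuclideanSpace ℝ (Fin 3))) = Measure.hausdorffMeasure 2 := by
    have := R.toIsometryEquiv.map_hausdorffMeasure (2 : ℝ)
    simpa using this
  have hmeas : MeasurePreserving R sphMeasure sphMeasure := by
    refine ⟨R.continuous.measurable, ?_⟩
    rw [sphMeasure, ← hS]
    conv_lhs => rw [← hRpre]
    rw [← Measure.restrict_map R.continuous.measurable (by rw [hS]; exact Metric.isClosed_sphere.measurableSet),
      hmapH]
  have h1 : ∫ y, f (R y) ∂sphMeasure = ∫ y, f y ∂sphMeasure :=
    hmeas.integral_comp (R.toHomeomorph.measurableEmbedding) f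
  -- f ∘ R = -f on the sphere
  have hptw : ∀ y ∈ S, f (R y) = -(f y) := by
    intro y hy
    have hy1 : ‖y‖ = 1 := by simpa [hS, mem_sphere_iff_norm] using hy
    have hxy : x - y ≠ 0 := by
      intro h
      have : x = y := by rwa [sub_eq_zero] at h
      rw [this, hy1] at hx; exact lt_irrefl _ hx
    have hxRy : x - R y ≠ 0 := by
      intro h
      have : x = R y := by rwa [sub_eq_zero] at h
      have : ‖x‖ = 1 := by rw [this, R.norm_map, hy1]
      rw [this] at hx; exact lt_irrefl _ hx
    have hsub : x - R y = R (x - y) := by rw [map_sub, hRx]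
    have hnorm : ‖x - R y‖ = ‖x - y‖ := by rw [hsub, R.norm_map]
    have hsum : (∑ j, v j * (R y) j) = -(∑ j, v j * y j) := by
      have hv1 : (inner ℝ v (R y) : ℝ) = ∑ j, v j * (R y) j := by
        simp [PiLp.inner_apply, RCLike.inner_apply, mul_comm]
      have hv2 : (inner ℝ v y : ℝ) = ∑ j, v j * y j := by
        simp [PiLp.inner_apply, RCLike.inner_apply, mul_comm]
      rw [← hv1, ← hv2]; exact hinnerR y
    rw [hform (R y) hxRy, hform y hxy, hnorm, hsum]
    push_cast
    ring
  have h2 : ∫ y, f (R y) ∂sphMeasure = ∫ y, -(f y) ∂sphMeasure := by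
    apply integral_congr_ae
    rw [sphMeasure, ← hS]
    exact (ae_restrict_iff' Metric.isClosed_sphere.measurableSet).2 (ae_of_all _ hptw)
  have h4 : ∫ y, f y ∂sphMeasure = -∫ y, f y ∂sphMeasure := by
    rw [← integral_neg, ← h2, h1]
  have : ∫ y, f y ∂sphMeasure = 0 := by linear_combination h4 / 2
  exact this
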